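/- Let p be an odd prime and Q a non-degenerate quadratic space over F_p of dimension n with maximal null subspaces of dimension m. For any null subspace N of dimension k ≤ m, the number of null vectors of Q orthogonal to N equals p^{n−k−1} + p^m − p^{n−m−1}. -/

import Mathlib

open Matrix
open Matrix Module LinearMap.BilinForm

set_option linter.unusedSectionVars false
set_option maxHeartbeats 1000000

variable {p n : ℕ} [Fact p.Prime]

private lemma bsymm {Λ : Matrix (Fin n) (Fin n) (ZMod p)} (hsym : Λ.IsSymm)
    (x y : Fin n → ZMod p) : x ⬝ᵥ (Λ *ᵥ y) = y ⬝ᵥ (Λ *ᵥ x) := by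
  rw [Matrix.dotProduct_mulVec, ← Matrix.mulVec_transpose, hsym.eq, dotProduct_comm]

private lemma bL (Λ : Matrix (Fin n) (Fin n) (ZMod p)) (c : ZMod p) (x y : Fin n → ZMod p) :
    (c • x) ⬝ᵥ (Λ *ᵥ y) = c * (x ⬝ᵥ (Λ *ᵥ y)) := by
  rw [smul_dotProduct]; rfl

private lemma bR (Λ : Matrix (Fin n) (Fin n) (ZMod p)) (c : ZMod p) (x y : Fin n → ZMod p) :
    x ⬝ᵥ (Λ *ᵥ (c • y)) = c * (x ⬝ᵥ (Λ *ᵥ y)) := by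
  rw [Matrix.mulVec_smul, dotProduct_smul]; rfl

private lemma bAddL (Λ : Matrix (Fin n) (Fin n) (ZMod p)) (x y z : Fin n → ZMod p) :
    (x + y) ⬝ᵥ (Λ *ᵥ z) = x ⬝ᵥ (Λ *ᵥ z) + y ⬝ᵥ (Λ *ᵥ z) := by
  rw [add_dotProduct]

private lemma bAddR (Λ : Matrix (Fin n) (Fin n) (ZMod p)) (x y z : Fin n → ZMod p) :
    x ⬝ᵥ (Λ *ᵥ (y + z)) = x ⬝ᵥ (Λ *ᵥ y) + x ⬝ᵥ (Λ *ᵥ z) := by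
  rw [Matrix.mulVec_add, dotProduct_add]

private lemma bSubL (Λ : Matrix (Fin n) (Fin n) (ZMod p)) (x y z : Fin n → ZMod p) :
    (x - y) ⬝ᵥ (Λ *ᵥ z) = x ⬝ᵥ (Λ *ᵥ z) - y ⬝ᵥ (Λ *ᵥ z) := by
  rw [sub_dotProduct]

private lemma bSubR (Λ : Matrix (Fin n) (Fin n) (ZMod p)) (x y z : Fin n → ZMod p) :
    x ⬝ᵥ (Λ *ᵥ (y - z)) = x ⬝ᵥ (Λ *ᵥ y) - x ⬝ᵥ (Λ *ᵥ z) := by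
  rw [Matrix.mulVec_sub, dotProduct_sub]

/-- The count of null vectors orthogonal to `N`. -/
private noncomputable def Zc (Λ : Matrix (Fin n) (Fin n) (ZMod p))
    (N : Submodule (ZMod p) (Fin n → ZMod p)) : ℕ :=
  Nat.card {x : Fin n → ZMod p // x ⬝ᵥ (Λ *ᵥ x) = 0 ∧ ∀ w ∈ N, x ⬝ᵥ (Λ *ᵥ w) = 0}

private lemma step (hp : p ≠ 2) (Λ : Matrix (Fin n) (Fin n) (ZMod p))
    (hsym : Λ.IsSymm) (hunit : IsUnit Λ)
    (N N' : Submodule (ZMod p) (Fin n → ZMod p)) (w : Fin n → ZMod p) (k' : ℕ)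
    (hN : ∀ x ∈ N, ∀ y ∈ N, x ⬝ᵥ (Λ *ᵥ y) = 0)
    (hle : N' ≤ N) (hwN : w ∈ N) (hwN' : w ∉ N')
    (hsup : N' ⊔ Submodule.span (ZMod p) {w} = N)
    (hk' : finrank (ZMod p) N' = k') (hn : k' + 2 ≤ n) :
    Zc Λ N + (p - 1) * p ^ (n - k' - 2) = Zc Λ N' := by
  classical
  have hp' : p.Prime := Fact.out
  have h2 : (2 : ZMod p) ≠ 0 := by
    intro h
    have : (p : ℕ) ∣ 2 := (ZMod.natCast_eq_zero_iff 2 p).mp (by exact_mod_cast h)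
    exact hp ((Nat.prime_dvd_prime_iff_eq hp' Nat.prime_two).mp this)
  set B := Matrix.toBilin' Λ with hB
  have hBapp : ∀ x y, B x y = x ⬝ᵥ (Λ *ᵥ y) := fun x y => Matrix.toBilin'_apply' Λ x y
  have hBsymm : B.IsSymm := by
    refine ⟨fun x y => ?_⟩
    simp only [RingHom.id_apply, hBapp]
    exact bsymm hsym x y
  have hrefl : B.IsRefl := hBsymm.isRefl
  have hBnd : B.Nondegenerate :=
    LinearMap.BilinForm.nondegenerate_toBilin'_iff_det_ne_zero.mpr
      ((Matrix.isUnit_iff_isUnit_det Λ).mp hunit).ne_zero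
  -- ranks
  have hw0 : w ≠ 0 := fun h => hwN' (h ▸ N'.zero_mem)
  have hkN : finrank (ZMod p) N = k' + 1 := by
    have hlt : N' < N := lt_of_le_of_ne hle (fun h => hwN' (h ▸ hwN))
    have h1 : k' < finrank (ZMod p) N := hk' ▸ Submodule.finrank_lt_finrank_of_lt hlt
    have h2' := Submodule.finrank_sup_add_finrank_inf_eq N' (Submodule.span (ZMod p) {w})
    rw [hsup, finrank_span_singleton hw0, hk'] at h2'
    omega
  set S' := B.orthogonal N' with hS'
  set T := B.orthogonal N with hT
  have hfinamb : finrank (ZMod p) (Fin n → ZMod p) = n := by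
    simp [Module.finrank_pi]
  have hS'rank : finrank (ZMod p) S' = n - k' := by
    rw [hS', LinearMap.BilinForm.finrank_orthogonal hBnd, hfinamb, hk']
  have hTrank : finrank (ZMod p) T = n - k' - 1 := by
    rw [hT, LinearMap.BilinForm.finrank_orthogonal hBnd, hfinamb, hkN, Nat.sub_sub]
  -- membership
  have hmemS' : ∀ x, x ∈ S' ↔ ∀ v ∈ N', x ⬝ᵥ (Λ *ᵥ v) = 0 := by
    intro x
    rw [hS', LinearMap.BilinForm.mem_orthogonal_iff]
    constructor
    · intro h v hv
      rw [bsymm hsym]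
      simpa [LinearMap.BilinForm.isOrtho_def, hBapp] using h v hv
    · intro h v hv
      have := h v hv
      rw [bsymm hsym] at this
      simpa [LinearMap.BilinForm.isOrtho_def, hBapp] using this
  have hwS' : w ∈ S' := by
    rw [hmemS']
    intro v hv
    exact hN w hwN v (hle hv)
  have hQw : w ⬝ᵥ (Λ *ᵥ w) = 0 := hN w hwN w hwN
  have hmemT : ∀ x, x ∈ T ↔ x ∈ S' ∧ x ⬝ᵥ (Λ *ᵥ w) = 0 := by
    intro x
    rw [hT, LinearMap.BilinForm.mem_orthogonal_iff, hmemS']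
    constructor
    · intro h
      refine ⟨fun v hv => ?_, ?_⟩
      · rw [bsymm hsym]; simpa [LinearMap.BilinForm.isOrtho_def, hBapp] using h v (hle hv)
      · rw [bsymm hsym]; simpa [LinearMap.BilinForm.isOrtho_def, hBapp] using h w hwN
    · rintro ⟨h1, h2⟩ v hv
      rw [← hsup] at hv
      obtain ⟨a, ha, b, hb, rfl⟩ := Submodule.mem_sup.mp hv
      obtain ⟨c, rfl⟩ := Submodule.mem_span_singleton.mp hb
      show B (a + c • w) x = 0
      rw [hBapp, bAddL, bL, bsymm hsym a x, h1 a ha, bsymm hsym w x, h2]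
      ring
  -- a vector pairing to 1 with w inside S'
  obtain ⟨x₁, hx₁S, hx₁w⟩ : ∃ x₁ ∈ S', x₁ ⬝ᵥ (Λ *ᵥ w) = 1 := by
    have hexists : ∃ x ∈ S', x ⬝ᵥ (Λ *ᵥ w) ≠ 0 := by
      by_contra h
      push_neg at h
      have : w ∈ B.orthogonal S' := by
        rw [LinearMap.BilinForm.mem_orthogonal_iff]
        intro s hs
        show B s w = 0
        rw [hBapp]
        exact h s hs
      rw [hS', LinearMap.BilinForm.orthogonal_orthogonal hBnd hrefl] at this
      exact hwN' this
    obtain ⟨x₀, hx₀S, hx₀w⟩ := hexists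
    refine ⟨(x₀ ⬝ᵥ (Λ *ᵥ w))⁻¹ • x₀, S'.smul_mem _ hx₀S, ?_⟩
    rw [bL, inv_mul_cancel₀ hx₀w]
  -- counting setup
  set α := {x : Fin n → ZMod p // x ∈ S' ∧ x ⬝ᵥ (Λ *ᵥ x) = 0} with hα
  set f : α → ZMod p := fun y => y.1 ⬝ᵥ (Λ *ᵥ w) with hf
  haveI : Fintype α := Fintype.ofFinite α
  haveI : ∀ b : ZMod p, Fintype {y : α // f y = b} := fun b => Fintype.ofFinite _
  -- Zc N' = card α
  have eZN' : Zc Λ N' = Nat.card α := by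
    unfold Zc
    apply Nat.card_congr
    apply Equiv.subtypeEquivRight
    intro x
    rw [hmemS' x]
    tauto
  -- card α = sum of fibers
  have e1 : Nat.card α = ∑ b : ZMod p, Nat.card {y : α // f y = b} := by
    calc Nat.card α = Nat.card (Σ b : ZMod p, {y : α // f y = b}) :=
          (Nat.card_congr (Equiv.sigmaFiberEquiv f)).symm
      _ = ∑ b : ZMod p, Nat.card {y : α // f y = b} := by
          rw [Nat.card_eq_fintype_card, Fintype.card_sigma]
          exact Finset.sum_congr rfl fun b _ => (Nat.card_eq_fintype_card).symm
  -- fiber 0 = Zc N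
  have e0 : Nat.card {y : α // f y = 0} = Zc Λ N := by
    unfold Zc
    apply Nat.card_congr
    refine (Equiv.subtypeSubtypeEquivSubtypeInter
      (fun x : Fin n → ZMod p => x ∈ S' ∧ x ⬝ᵥ (Λ *ᵥ x) = 0)
      (fun x => x ⬝ᵥ (Λ *ᵥ w) = 0)).trans (Equiv.subtypeEquivRight ?_)
    intro x
    constructor
    · rintro ⟨⟨hxS, hxQ⟩, hxw⟩
      refine ⟨hxQ, fun v hv => ?_⟩
      rw [← hsup] at hv
      obtain ⟨a, ha, b, hb, rfl⟩ := Submodule.mem_sup.mp hv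
      obtain ⟨c, rfl⟩ := Submodule.mem_span_singleton.mp hb
      rw [bAddR, bR, (hmemS' x).mp hxS a ha, hxw]
      ring
    · rintro ⟨hxQ, hall⟩
      exact ⟨⟨(hmemS' x).mpr fun v hv => hall v (hle hv), hxQ⟩, hall w hwN⟩
  -- fibers over nonzero b all have the same cardinality
  have escale : ∀ b : ZMod p, b ≠ 0 →
      Nat.card {y : α // f y = b} = Nat.card {y : α // f y = 1} := by
    intro b hb
    apply Nat.card_congr
    refine ⟨fun y => ⟨⟨b⁻¹ • y.1.1, ?_, ?_⟩, ?_⟩, fun y => ⟨⟨b • y.1.1, ?_, ?_⟩, ?_⟩, ?_, ?_⟩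
    · exact S'.smul_mem _ y.1.2.1
    · rw [bL, bR, y.1.2.2]; ring
    · show (b⁻¹ • y.1.1) ⬝ᵥ (Λ *ᵥ w) = 1
      have h3 : y.1.1 ⬝ᵥ (Λ *ᵥ w) = b := y.2
      rw [bL, h3, inv_mul_cancel₀ hb]
    · exact S'.smul_mem _ y.1.2.1
    · rw [bL, bR, y.1.2.2]; ring
    · show (b • y.1.1) ⬝ᵥ (Λ *ᵥ w) = b
      have h3 : y.1.1 ⬝ᵥ (Λ *ᵥ w) = 1 := y.2
      rw [bL, h3, mul_one]
    · intro y
      ext : 2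
      show b • (b⁻¹ • y.1.1) = y.1.1
      rw [smul_smul, mul_inv_cancel₀ hb, one_smul]
    · intro y
      ext : 2
      show b⁻¹ • (b • y.1.1) = y.1.1
      rw [smul_smul, inv_mul_cancel₀ hb, one_smul]
  -- quadratic expansion helpers
  have expand : ∀ x y : Fin n → ZMod p,
      (x + y) ⬝ᵥ (Λ *ᵥ (x + y)) =
        x ⬝ᵥ (Λ *ᵥ x) + 2 * (x ⬝ᵥ (Λ *ᵥ y)) + y ⬝ᵥ (Λ *ᵥ y) := by
    intro x y
    rw [bAddR, bAddL, bAddL, bsymm hsym y x]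
    ring
  have expand2 : ∀ (x : Fin n → ZMod p) (t : ZMod p),
      (x + t • w) ⬝ᵥ (Λ *ᵥ (x + t • w)) =
        x ⬝ᵥ (Λ *ᵥ x) + 2 * t * (x ⬝ᵥ (Λ *ᵥ w)) := by
    intro x t
    rw [expand, bR, bL, bR, hQw]
    ring
  have expand2f : ∀ (x : Fin n → ZMod p) (t : ZMod p),
      (x + t • w) ⬝ᵥ (Λ *ᵥ w) = x ⬝ᵥ (Λ *ᵥ w) := by
    intro x t
    rw [bAddL, bL, hQw]
    ring
  -- the fiber over 1, crossed with a line, is the affine slice of S'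
  have eqv : {x : Fin n → ZMod p // x ∈ S' ∧ x ⬝ᵥ (Λ *ᵥ w) = 1} ≃
      {y : α // f y = 1} × ZMod p := by
    have h21 : (2 : ZMod p) * (2 : ZMod p)⁻¹ = 1 := mul_inv_cancel₀ h2
    refine ⟨fun x => ⟨⟨⟨x.1 + (-((2:ZMod p)⁻¹ * (x.1 ⬝ᵥ (Λ *ᵥ x.1)))) • w, ?_, ?_⟩, ?_⟩,
        (2:ZMod p)⁻¹ * (x.1 ⬝ᵥ (Λ *ᵥ x.1))⟩,
      fun y => ⟨y.1.1.1 + y.2 • w, ?_, ?_⟩, ?_, ?_⟩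
    · exact S'.add_mem x.2.1 (S'.smul_mem _ hwS')
    · rw [expand2, x.2.2]
      ring_nf
      rw [mul_assoc, inv_mul_cancel₀ h2, mul_one, sub_self]
    · show (x.1 + _ • w) ⬝ᵥ (Λ *ᵥ w) = 1
      rw [expand2f, x.2.2]
    · exact S'.add_mem y.1.1.2.1 (S'.smul_mem _ hwS')
    · have h1 : y.1.1.1 ⬝ᵥ (Λ *ᵥ w) = 1 := y.1.2
      rw [expand2f, h1]
    · intro x
      ext : 1
      show x.1 + (-((2:ZMod p)⁻¹ * (x.1 ⬝ᵥ (Λ *ᵥ x.1)))) • w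
          + ((2:ZMod p)⁻¹ * (x.1 ⬝ᵥ (Λ *ᵥ x.1))) • w = x.1
      rw [add_assoc, ← add_smul]
      simp
    · intro y
      obtain ⟨⟨⟨z, hzS, hzQ⟩, hz1⟩, t⟩ := y
      have h1 : z ⬝ᵥ (Λ *ᵥ w) = 1 := hz1
      have hQ : (z + t • w) ⬝ᵥ (Λ *ᵥ (z + t • w)) = 2 * t := by
        rw [expand2, hzQ, h1]
        ring
      refine Prod.ext ?_ ?_
      · apply Subtype.ext
        apply Subtype.ext
        show z + t • w + (-((2:ZMod p)⁻¹ * ((z + t • w) ⬝ᵥ (Λ *ᵥ (z + t • w))))) • w = z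
        rw [hQ, add_assoc, ← add_smul]
        have : t + -((2:ZMod p)⁻¹ * (2 * t)) = 0 := by
          field_simp
          ring
        rw [this]
        simp
      · show (2:ZMod p)⁻¹ * ((z + t • w) ⬝ᵥ (Λ *ᵥ (z + t • w))) = t
        rw [hQ]
        field_simp
  -- the affine slice is a coset of T
  have eET : {x : Fin n → ZMod p // x ∈ S' ∧ x ⬝ᵥ (Λ *ᵥ w) = 1} ≃ {x : Fin n → ZMod p // x ∈ T} := by
    refine ⟨fun x => ⟨x.1 - x₁, (hmemT _).mpr ⟨S'.sub_mem x.2.1 hx₁S, ?_⟩⟩,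
      fun y => ⟨y.1 + x₁, S'.add_mem ((hmemT _).mp y.2).1 hx₁S, ?_⟩, ?_, ?_⟩
    · rw [bSubL, x.2.2, hx₁w]
      ring
    · rw [bAddL, ((hmemT _).mp y.2).2, hx₁w]
      ring
    · intro x
      apply Subtype.ext
      show x.1 - x₁ + x₁ = x.1
      abel
    · intro y
      apply Subtype.ext
      show y.1 + x₁ - x₁ = y.1
      abel
  have cardT : Nat.card {x : Fin n → ZMod p // x ∈ T} = p ^ (n - k' - 1) := by
    haveI : Fintype T := Fintype.ofFinite _
    rw [show {x : Fin n → ZMod p // x ∈ T} = ↥T from rfl, Nat.card_eq_fintype_card,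
      card_eq_pow_finrank (K := ZMod p), ZMod.card, hTrank]
  have c1 : Nat.card {y : α // f y = 1} * p = p ^ (n - k' - 1) := by
    rw [← cardT, ← Nat.card_congr eET, Nat.card_congr eqv, Nat.card_prod, Nat.card_zmod]
  have c2 : Nat.card {y : α // f y = 1} = p ^ (n - k' - 2) := by
    have hpow : p ^ (n - k' - 1) = p ^ (n - k' - 2) * p := by
      rw [← pow_succ]
      congr 1
      omega
    exact Nat.eq_of_mul_eq_mul_right hp'.pos (c1.trans hpow)
  have final : Zc Λ N' = Zc Λ N + (p - 1) * p ^ (n - k' - 2) := by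
    calc Zc Λ N' = Nat.card α := eZN'
      _ = ∑ b : ZMod p, Nat.card {y : α // f y = b} := e1
      _ = Nat.card {y : α // f y = 0}
            + ∑ b ∈ Finset.univ.erase 0, Nat.card {y : α // f y = b} :=
          (Finset.add_sum_erase _ _ (Finset.mem_univ 0)).symm
      _ = Zc Λ N + (p - 1) * p ^ (n - k' - 2) := by
          rw [e0]
          congr 1
          rw [Finset.sum_congr rfl (fun b hb =>
            (escale b (Finset.mem_erase.mp hb).1).trans c2)]
          rw [Finset.sum_const, Finset.card_erase_of_mem (Finset.mem_univ 0),
            Finset.card_univ, ZMod.card, smul_eq_mul]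
  omega


private lemma null_rank_le (Λ : Matrix (Fin n) (Fin n) (ZMod p))
    (hsym : Λ.IsSymm) (hunit : IsUnit Λ)
    (N : Submodule (ZMod p) (Fin n → ZMod p))
    (hN : ∀ x ∈ N, ∀ y ∈ N, x ⬝ᵥ (Λ *ᵥ y) = 0) :
    2 * finrank (ZMod p) N ≤ n := by
  set B := Matrix.toBilin' Λ with hB
  have hBapp : ∀ x y, B x y = x ⬝ᵥ (Λ *ᵥ y) := fun x y => Matrix.toBilin'_apply' Λ x y
  have hBsymm : B.IsSymm := by
    refine ⟨fun x y => ?_⟩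
    simp only [RingHom.id_apply, hBapp]
    exact bsymm hsym x y
  have hrefl : B.IsRefl := hBsymm.isRefl
  have hBnd : B.Nondegenerate :=
    LinearMap.BilinForm.nondegenerate_toBilin'_iff_det_ne_zero.mpr
      ((Matrix.isUnit_iff_isUnit_det Λ).mp hunit).ne_zero
  have hfinamb : finrank (ZMod p) (Fin n → ZMod p) = n := by
    simp [Module.finrank_pi]
  have hle : N ≤ B.orthogonal N := by
    intro x hx
    rw [LinearMap.BilinForm.mem_orthogonal_iff]
    intro v hv
    show B v x = 0
    rw [hBapp]
    exact hN v hv x hx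
  have h1 : finrank (ZMod p) N ≤ finrank (ZMod p) (B.orthogonal N) :=
    Submodule.finrank_mono hle
  rw [LinearMap.BilinForm.finrank_orthogonal hBnd, hfinamb] at h1
  have h2 : finrank (ZMod p) N ≤ finrank (ZMod p) (Fin n → ZMod p) := Submodule.finrank_le N
  rw [hfinamb] at h2
  omega

private lemma tele (hp : p ≠ 2) (Λ : Matrix (Fin n) (Fin n) (ZMod p))
    (hsym : Λ.IsSymm) (hunit : IsUnit Λ) :
    ∀ (k : ℕ) (N : Submodule (ZMod p) (Fin n → ZMod p)),
      (∀ x ∈ N, ∀ y ∈ N, x ⬝ᵥ (Λ *ᵥ y) = 0) → finrank (ZMod p) N = k →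
      Zc Λ N + p ^ (n - 1) = Zc Λ (⊥ : Submodule (ZMod p) (Fin n → ZMod p)) + p ^ (n - k - 1) := by
  intro k
  induction k with
  | zero =>
    intro N hN hk
    have hbot : N = ⊥ := Submodule.finrank_eq_zero.mp hk
    subst hbot
    simp
  | succ k ih =>
    intro N hN hk
    have hp' : p.Prime := Fact.out
    have h2n : 2 * (k + 1) ≤ n := hk ▸ null_rank_le Λ hsym hunit N hN
    -- construct a hyperplane N' of N and a complementary vector w
    let bN := Module.finBasis (ZMod p) ↥N
    let v : Fin (k + 1) → (Fin n → ZMod p) :=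
      fun i => (bN (finCongr hk.symm i) : Fin n → ZMod p)
    have hv : LinearIndependent (ZMod p) v := by
      have h1 : LinearIndependent (ZMod p) (N.subtype ∘ bN) :=
        bN.linearIndependent.map' N.subtype N.ker_subtype
      exact h1.comp (finCongr hk.symm) (Equiv.injective _)
    have hvmem : ∀ i, v i ∈ N := fun i => (bN (finCongr hk.symm i)).2
    have hrange : Submodule.span (ZMod p) (Set.range v) = N := by
      have h1 : Set.range v = N.subtype '' (Set.range bN) := by
        ext x
        constructor
        · rintro ⟨i, rfl⟩
          exact ⟨bN (finCongr hk.symm i), ⟨_, rfl⟩, rfl⟩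
        · rintro ⟨y, ⟨j, rfl⟩, rfl⟩
          exact ⟨finCongr hk j, by simp [v]⟩
      rw [h1, ← Submodule.map_span, bN.span_eq, Submodule.map_subtype_top]
    set w := v (Fin.last k) with hwdef
    set N' := Submodule.span (ZMod p) (Set.range (v ∘ Fin.castSucc)) with hN'def
    have hN'rank : finrank (ZMod p) N' = k := by
      rw [hN'def, finrank_span_eq_card (hv.comp Fin.castSucc (Fin.castSucc_injective k)),
        Fintype.card_fin]
    have hwN : w ∈ N := hvmem _
    have hwN' : w ∉ N' := by
      have h1 : Set.range (v ∘ Fin.castSucc) = v '' Set.range (Fin.castSucc) :=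
        Set.range_comp v Fin.castSucc
      rw [hN'def, h1]
      apply hv.notMem_span_image
      simp [Fin.range_castSucc]
    have hle' : N' ≤ N := by
      rw [hN'def, Submodule.span_le]
      rintro x ⟨i, rfl⟩
      exact hvmem _
    have hsup : N' ⊔ Submodule.span (ZMod p) {w} = N := by
      rw [hN'def, ← Submodule.span_union, ← hrange]
      congr 1
      ext x
      constructor
      · rintro (⟨i, rfl⟩ | rfl)
        · exact ⟨_, rfl⟩
        · exact ⟨_, rfl⟩
      · rintro ⟨i, rfl⟩
        rcases Fin.eq_castSucc_or_eq_last i with ⟨j, rfl⟩ | rfl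
        · exact Or.inl ⟨j, rfl⟩
        · exact Or.inr rfl
    have hstep := step hp Λ hsym hunit N N' w k hN hle' hwN hwN' hsup hN'rank (by omega)
    have hN' : ∀ x ∈ N', ∀ y ∈ N', x ⬝ᵥ (Λ *ᵥ y) = 0 :=
      fun x hx y hy => hN x (hle' hx) y (hle' hy)
    have hih := ih N' hN' hN'rank
    have hgoal : n - (k + 1) - 1 = n - k - 2 := by omega
    rw [hgoal]
    have hps : p ^ (n - k - 1) = p ^ (n - k - 2) * p := by
      rw [← pow_succ]
      congr 1
      omega
    have hc : (p - 1) * p ^ (n - k - 2) + p ^ (n - k - 2) = p ^ (n - k - 2) * p := by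
      rw [mul_comm (p ^ (n - k - 2)) p, ← Nat.succ_mul, Nat.succ_eq_add_one,
        Nat.sub_add_cancel hp'.one_le]
    linarith [hstep, hih, hps, hc]


/-- let `Q = F_p^n` (`p` an odd prime) carry a non-degenerate
symmetric bilinear form with Gram matrix `Λ`, whose maximal null subspaces have
dimension `m`.  For any null subspace `N` of dimension `k ≤ m`, the number of
null vectors orthogonal to `N` is `p^{n-k-1} + p^m - p^{n-m-1}` (stated
additively to avoid truncated subtraction). -/
theorem stmt15 (p : ℕ) [Fact p.Prime] (hp : p ≠ 2) (n m k : ℕ)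
    (Λ : Matrix (Fin n) (Fin n) (ZMod p)) (hsym : Λ.IsSymm) (hunit : IsUnit Λ)
    (hm_bound : ∀ W : Submodule (ZMod p) (Fin n → ZMod p),
      (∀ x ∈ W, ∀ y ∈ W, x ⬝ᵥ (Λ *ᵥ y) = 0) → Module.finrank (ZMod p) W ≤ m)
    (hm_exists : ∃ W : Submodule (ZMod p) (Fin n → ZMod p),
      (∀ x ∈ W, ∀ y ∈ W, x ⬝ᵥ (Λ *ᵥ y) = 0) ∧ Module.finrank (ZMod p) W = m)
    (N : Submodule (ZMod p) (Fin n → ZMod p))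
    (hN : ∀ x ∈ N, ∀ y ∈ N, x ⬝ᵥ (Λ *ᵥ y) = 0)
    (hk : Module.finrank (ZMod p) N = k) (hkm : k ≤ m) :
    Nat.card {x : Fin n → ZMod p //
        x ⬝ᵥ (Λ *ᵥ x) = 0 ∧ ∀ w ∈ N, x ⬝ᵥ (Λ *ᵥ w) = 0}
      + p ^ (n - m - 1)
      = p ^ (n - k - 1) + p ^ m := by
  obtain ⟨W, hWnull, hWrank⟩ := hm_exists
  have hp' : p.Prime := Fact.out
  -- the null vectors orthogonal to a maximal null subspace form that subspace
  have hZW : Zc Λ W = p ^ m := by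
    have hiff : ∀ x : Fin n → ZMod p,
        (x ⬝ᵥ (Λ *ᵥ x) = 0 ∧ ∀ w ∈ W, x ⬝ᵥ (Λ *ᵥ w) = 0) ↔ x ∈ W := by
      intro x
      constructor
      · rintro ⟨hxQ, hxW⟩
        set W' := W ⊔ Submodule.span (ZMod p) {x} with hW'
        have hW'null : ∀ a ∈ W', ∀ b ∈ W', a ⬝ᵥ (Λ *ᵥ b) = 0 := by
          intro a ha b hb
          rw [hW'] at ha hb
          obtain ⟨a1, ha1, a2, ha2, rfl⟩ := Submodule.mem_sup.mp ha
          obtain ⟨b1, hb1, b2, hb2, rfl⟩ := Submodule.mem_sup.mp hb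
          obtain ⟨c, rfl⟩ := Submodule.mem_span_singleton.mp ha2
          obtain ⟨d, rfl⟩ := Submodule.mem_span_singleton.mp hb2
          have h11 : a1 ⬝ᵥ (Λ *ᵥ b1) = 0 := hWnull a1 ha1 b1 hb1
          have h1x : a1 ⬝ᵥ (Λ *ᵥ x) = 0 := by
            rw [bsymm hsym]
            exact hxW a1 ha1
          have hb1x : b1 ⬝ᵥ (Λ *ᵥ x) = 0 := by
            rw [bsymm hsym]
            exact hxW b1 hb1
          have hx1 : x ⬝ᵥ (Λ *ᵥ b1) = 0 := hxW b1 hb1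
          have hxa1 : x ⬝ᵥ (Λ *ᵥ a1) = 0 := hxW a1 ha1
          simp only [bAddL, bAddR, bL, bR, h11, h1x, hb1x, hx1, hxa1, hxQ, mul_zero, add_zero,
            zero_add]
        have hW'le : finrank (ZMod p) W' ≤ m := hm_bound W' hW'null
        have hWW' : W = W' := by
          apply Submodule.eq_of_le_of_finrank_le le_sup_left
          rw [hWrank]
          exact hW'le
        have : x ∈ W' := Submodule.mem_sup_right (Submodule.mem_span_singleton_self x)
        rwa [← hWW'] at this
      · intro hx
        exact ⟨hWnull x hx x hx, fun v hv => hWnull x hx v hv⟩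
    unfold Zc
    rw [Nat.card_congr (Equiv.subtypeEquivRight hiff)]
    haveI : Fintype W := Fintype.ofFinite _
    rw [show {x : Fin n → ZMod p // x ∈ W} = ↥W from rfl, Nat.card_eq_fintype_card,
      card_eq_pow_finrank (K := ZMod p), ZMod.card, hWrank]
  have hW := tele hp Λ hsym hunit m W hWnull hWrank
  have hNt := tele hp Λ hsym hunit k N hN hk
  rw [hZW] at hW
  show Zc Λ N + p ^ (n - m - 1) = p ^ (n - k - 1) + p ^ m
  linarith [hW, hNt]
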